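/- Fix integers 1 ≤ i ≤ n−1 and R > 0, and let D^n_{i,R} be the set of ζ ∈ D^n_i with support contained in (0,R]. Then D^n_{i,R} is a Banach space (i.e., complete) with respect to the norm ‖ζ‖ := sup_{t>0} |(n−i)∫_t^∞ ζ(s)s^{n−i−1}ds| + sup_{t>0} |t^{n−i}ζ(t) + (n−i)∫_t^∞ ζ(s)s^{n−i−1}ds|. -/

import Mathlib

open MeasureTheory Filter

/-- The class `D^n_i`. -/
def Dni (n i : ℕ) (ζ : ℝ → ℝ) : Prop :=
  ContinuousOn ζ (Set.Ioi 0) ∧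
  (∃ R : ℝ, ∀ t > R, ζ t = 0) ∧
  Tendsto (fun t : ℝ => t ^ (n - i) * ζ t) (nhdsWithin 0 (Set.Ioi 0)) (nhds 0) ∧
  ∃ L : ℝ, Tendsto (fun t : ℝ => ∫ s in Set.Ioi t, ζ s * s ^ (n - i - 1))
    (nhdsWithin 0 (Set.Ioi 0)) (nhds L)

/-- `D^n_{i,R}`: elements of `D^n_i` supported in `(0,R]`. -/
def DniR (n i : ℕ) (R : ℝ) (ζ : ℝ → ℝ) : Prop :=
  Dni n i ζ ∧ ∀ t > R, ζ t = 0

/-- The norm `‖ζ‖` on `D^n_i`. -/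
noncomputable def dnorm (n i : ℕ) (ζ : ℝ → ℝ) : ℝ :=
  (⨆ t : Set.Ioi (0:ℝ), |(n - i : ℝ) * ∫ s in Set.Ioi (t:ℝ), ζ s * s ^ (n - i - 1)|) +
  (⨆ t : Set.Ioi (0:ℝ),
    |(t:ℝ) ^ (n - i) * ζ t + (n - i : ℝ) * ∫ s in Set.Ioi (t:ℝ), ζ s * s ^ (n - i - 1)|)

noncomputable def Kfun (m : ℕ) (f : ℝ → ℝ) (t : ℝ) : ℝ :=
  ∫ s in Set.Ioi t, f s * s ^ (m - 1)

lemma int1 (m : ℕ) {R : ℝ} (f : ℝ → ℝ) (hc : ContinuousOn f (Set.Ioi 0))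
    (h0 : ∀ t > R, f t = 0) {t : ℝ} (ht : 0 < t) :
    IntegrableOn (fun s => f s * s ^ (m - 1)) (Set.Ioi t) := by
  set M := max R t with hM
  have htM : t ≤ M := le_max_right _ _
  have hsplit : Set.Ioi t = Set.Ioc t M ∪ Set.Ioi M := (Set.Ioc_union_Ioi_eq_Ioi htM).symm
  rw [hsplit]
  apply MeasureTheory.IntegrableOn.union
  · have hcc : ContinuousOn (fun s => f s * s ^ (m - 1)) (Set.Icc t M) := by
      apply ContinuousOn.mul
      · exact hc.mono (fun x hx => lt_of_lt_of_le ht hx.1)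
      · exact (continuous_pow _).continuousOn
    exact (hcc.integrableOn_compact isCompact_Icc).mono_set Set.Ioc_subset_Icc_self
  · have : ∀ s ∈ Set.Ioi M, f s * s ^ (m-1) = 0 := by
      intro s hs
      rw [h0 s (lt_of_le_of_lt (le_max_left R t) hs), zero_mul]
    rw [MeasureTheory.integrableOn_congr_fun this measurableSet_Ioi]
    exact integrableOn_zero

lemma Keq (m : ℕ) {R : ℝ} (f : ℝ → ℝ) (hc : ContinuousOn f (Set.Ioi 0))
    (h0 : ∀ t > R, f t = 0) {t : ℝ} (ht : 0 < t) :
    Kfun m f t = ∫ s in Set.Ioc t R, f s * s ^ (m - 1) := by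
  rcases le_or_gt t R with hle | hlt
  · have hsplit : Set.Ioi t = Set.Ioc t R ∪ Set.Ioi R := (Set.Ioc_union_Ioi_eq_Ioi hle).symm
    have hint := int1 m f hc h0 ht
    rw [Kfun, hsplit, MeasureTheory.setIntegral_union (Set.Ioc_disjoint_Ioi le_rfl)
      measurableSet_Ioi (by rw [hsplit] at hint; exact hint.mono_set Set.subset_union_left)
      (by rw [hsplit] at hint; exact hint.mono_set Set.subset_union_right)]
    have : ∀ s ∈ Set.Ioi R, f s * s ^ (m-1) = 0 := fun s hs => by rw [h0 s hs, zero_mul]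
    rw [MeasureTheory.setIntegral_congr_fun measurableSet_Ioi this]
    simp
  · have h1 : ∀ s ∈ Set.Ioi t, f s * s ^ (m-1) = 0 := fun s hs => by
      rw [h0 s (hlt.trans hs), zero_mul]
    rw [Kfun, MeasureTheory.setIntegral_congr_fun measurableSet_Ioi h1,
      Set.Ioc_eq_empty (by exact fun h => absurd h (not_lt.mpr hlt.le))]
    simp

lemma Ksub (m : ℕ) {R : ℝ} (f g : ℝ → ℝ) (hcf : ContinuousOn f (Set.Ioi 0))
    (hcg : ContinuousOn g (Set.Ioi 0)) (h0f : ∀ t > R, f t = 0) (h0g : ∀ t > R, g t = 0)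
    {t : ℝ} (ht : 0 < t) :
    Kfun m (fun s => f s - g s) t = Kfun m f t - Kfun m g t := by
  unfold Kfun
  rw [← MeasureTheory.integral_sub (int1 m f hcf h0f ht) (int1 m g hcg h0g ht)]
  congr 1; ext s; ring

lemma Kbdd (m : ℕ) {R : ℝ} (f : ℝ → ℝ) (hc : ContinuousOn f (Set.Ioi 0))
    (h0 : ∀ t > R, f t = 0) {δ t : ℝ} (hδ : 0 < δ) (hδt : δ ≤ t) :
    |Kfun m f t| ≤ ∫ s in Set.Ioc δ R, |f s * s ^ (m - 1)| := by
  rw [Keq m f hc h0 (hδ.trans_le hδt)]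
  calc |∫ s in Set.Ioc t R, f s * s ^ (m - 1)|
      ≤ ∫ s in Set.Ioc t R, |f s * s ^ (m - 1)| := by
        simpa only [Real.norm_eq_abs] using MeasureTheory.norm_integral_le_integral_norm
          (μ := volume.restrict (Set.Ioc t R)) (fun s => f s * s ^ (m - 1))
    _ ≤ ∫ s in Set.Ioc δ R, |f s * s ^ (m - 1)| := by
        apply MeasureTheory.setIntegral_mono_set
        · exact ((int1 m f hc h0 hδ).mono_set Set.Ioc_subset_Ioi_self).abs
        · exact Filter.Eventually.of_forall fun s => abs_nonneg _
        · exact HasSubset.Subset.eventuallyLE (Set.Ioc_subset_Ioc_left hδt)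

lemma bdd_of (F : ℝ → ℝ) (hc : ContinuousOn F (Set.Ioi 0)) {l R : ℝ} (_hR : 0 < R)
    (hl : Tendsto F (nhdsWithin 0 (Set.Ioi 0)) (nhds l))
    (h0 : ∀ t > R, F t = 0) : ∃ C, ∀ t > 0, |F t| ≤ C := by
  obtain ⟨δ, hδ, hδ'⟩ := Metric.tendsto_nhdsWithin_nhds.mp hl 1 one_pos
  obtain ⟨C2, hC2⟩ := (isCompact_Icc (a := δ) (b := R)).exists_bound_of_continuousOn
    (hc.mono (fun x hx => lt_of_lt_of_le hδ hx.1))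
  refine ⟨max (|l| + 1) (max C2 0), fun t ht => ?_⟩
  rcases lt_or_ge t δ with h | h
  · have := hδ' (Set.mem_Ioi.mpr ht) (by rw [Real.dist_eq, sub_zero, abs_of_pos ht]; exact h)
    rw [Real.dist_eq] at this
    calc |F t| = |F t - l + l| := by ring_nf
      _ ≤ |F t - l| + |l| := abs_add_le _ _
      _ ≤ max (|l| + 1) (max C2 0) := le_max_of_le_left (by linarith)
  · rcases le_or_gt t R with h2 | h2
    · exact le_max_of_le_right (le_max_of_le_left (hC2 t ⟨h, h2⟩))
    · rw [h0 t h2]; simp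

lemma dnorm_eq (n i : ℕ) (hin : i ≤ n) (f : ℝ → ℝ) :
    dnorm n i f = (⨆ t : Set.Ioi (0:ℝ), |((n - i : ℕ) : ℝ) * Kfun (n - i) f t|) +
      (⨆ t : Set.Ioi (0:ℝ),
        |(t:ℝ) ^ (n - i) * f t + ((n - i : ℕ) : ℝ) * Kfun (n - i) f t|) := by
  unfold dnorm Kfun
  simp only [Nat.cast_sub hin]

lemma Kfun_bounded (m : ℕ) {R : ℝ} (f : ℝ → ℝ) (hc : ContinuousOn f (Set.Ioi 0))
    (h0 : ∀ t > R, f t = 0)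
    {l : ℝ} (hK : Tendsto (Kfun m f) (nhdsWithin 0 (Set.Ioi 0)) (nhds l)) :
    ∃ C, ∀ t > 0, |Kfun m f t| ≤ C := by
  obtain ⟨δ, hδ, hδ'⟩ := Metric.tendsto_nhdsWithin_nhds.mp hK 1 one_pos
  refine ⟨max (|l| + 1) (∫ s in Set.Ioc δ R, |f s * s ^ (m - 1)|), fun t ht => ?_⟩
  rcases lt_or_ge t δ with h | h
  · have := hδ' (Set.mem_Ioi.mpr ht) (by rw [Real.dist_eq, sub_zero, abs_of_pos ht]; exact h)
    rw [Real.dist_eq] at this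
    calc |Kfun m f t| = |Kfun m f t - l + l| := by ring_nf
      _ ≤ |Kfun m f t - l| + |l| := abs_add_le _ _
      _ ≤ max (|l| + 1) _ := le_max_of_le_left (by linarith)
  · exact le_max_of_le_right (Kbdd m f hc h0 hδ h)

lemma key_le (n i : ℕ) (hin : i ≤ n) {R : ℝ} (hR : 0 < R) (f : ℝ → ℝ)
    (hc : ContinuousOn f (Set.Ioi 0)) (h0 : ∀ t > R, f t = 0)
    (hp : Tendsto (fun t : ℝ => t ^ (n - i) * f t) (nhdsWithin 0 (Set.Ioi 0)) (nhds 0))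
    {l : ℝ} (hK : Tendsto (Kfun (n - i) f) (nhdsWithin 0 (Set.Ioi 0)) (nhds l)) :
    ∀ t > 0, |((n - i : ℕ) : ℝ) * Kfun (n - i) f t| ≤ dnorm n i f ∧
      |t ^ (n - i) * f t + ((n - i : ℕ) : ℝ) * Kfun (n - i) f t| ≤ dnorm n i f := by
  set m := n - i with hm
  obtain ⟨CK, hCK⟩ := Kfun_bounded m f hc h0 hK
  obtain ⟨CB, hCB⟩ := bdd_of (fun t => t ^ m * f t)
    (ContinuousOn.mul (continuous_pow m).continuousOn hc) hR hp
    (fun t ht => by simp only [h0 t ht, mul_zero])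
  have hCK' : ∀ t : Set.Ioi (0:ℝ), |((m:ℕ):ℝ) * Kfun m f (t:ℝ)| ≤ (m:ℝ) * CK := by
    intro t
    rw [abs_mul, Nat.abs_cast]
    exact mul_le_mul_of_nonneg_left (hCK t t.2) (Nat.cast_nonneg m)
  have hCB' : ∀ t : Set.Ioi (0:ℝ),
      |(t:ℝ) ^ m * f t + ((m:ℕ):ℝ) * Kfun m f (t:ℝ)| ≤ CB + (m:ℝ) * CK := by
    intro t
    calc |(t:ℝ) ^ m * f t + ((m:ℕ):ℝ) * Kfun m f (t:ℝ)|
        ≤ |(t:ℝ) ^ m * f t| + |((m:ℕ):ℝ) * Kfun m f (t:ℝ)| := abs_add_le _ _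
      _ ≤ CB + (m:ℝ) * CK := add_le_add (hCB t t.2) (hCK' t)
  have hbA : BddAbove (Set.range fun t : Set.Ioi (0:ℝ) => |((m:ℕ):ℝ) * Kfun m f (t:ℝ)|) :=
    ⟨(m:ℝ) * CK, Set.forall_mem_range.mpr hCK'⟩
  have hbB : BddAbove (Set.range fun t : Set.Ioi (0:ℝ) =>
      |(t:ℝ) ^ m * f t + ((m:ℕ):ℝ) * Kfun m f (t:ℝ)|) :=
    ⟨CB + (m:ℝ) * CK, Set.forall_mem_range.mpr hCB'⟩
  have hnA : 0 ≤ ⨆ t : Set.Ioi (0:ℝ), |((m:ℕ):ℝ) * Kfun m f (t:ℝ)| :=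
    Real.iSup_nonneg fun _ => abs_nonneg _
  have hnB : 0 ≤ ⨆ t : Set.Ioi (0:ℝ), |(t:ℝ) ^ m * f t + ((m:ℕ):ℝ) * Kfun m f (t:ℝ)| :=
    Real.iSup_nonneg fun _ => abs_nonneg _
  intro t ht
  rw [dnorm_eq n i hin f]
  constructor
  · calc |((m:ℕ):ℝ) * Kfun m f t|
        ≤ ⨆ t : Set.Ioi (0:ℝ), |((m:ℕ):ℝ) * Kfun m f (t:ℝ)| :=
          le_ciSup hbA (⟨t, ht⟩ : Set.Ioi (0:ℝ))
      _ ≤ _ := le_add_of_nonneg_right hnB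
  · calc |t ^ m * f t + ((m:ℕ):ℝ) * Kfun m f t|
        ≤ ⨆ t : Set.Ioi (0:ℝ), |(t:ℝ) ^ m * f t + ((m:ℕ):ℝ) * Kfun m f (t:ℝ)| :=
          le_ciSup hbB (⟨t, ht⟩ : Set.Ioi (0:ℝ))
      _ ≤ _ := le_add_of_nonneg_left hnA

/-- `D^n_{i,R}` is complete with respect to the norm `‖·‖`. -/
theorem stmt4 (n i : ℕ) (h1 : 1 ≤ i) (h2 : i ≤ n - 1) (R : ℝ) (hR : 0 < R)
    (ζ : ℕ → ℝ → ℝ) (hmem : ∀ j, DniR n i R (ζ j))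
    (hcauchy : ∀ ε > (0:ℝ), ∃ N : ℕ, ∀ j l, N ≤ j → N ≤ l →
      dnorm n i (fun t => ζ j t - ζ l t) < ε) :
    ∃ g : ℝ → ℝ, DniR n i R g ∧
      Tendsto (fun j => dnorm n i (fun t => ζ j t - g t)) atTop (nhds 0) := by
  have hin : i ≤ n := by omega
  have hm0 : 0 < n - i := by omega
  have hm1 : (1:ℝ) ≤ ((n - i : ℕ) : ℝ) := by exact_mod_cast hm0
  -- basic data of the sequence
  have hcj : ∀ j, ContinuousOn (ζ j) (Set.Ioi 0) := fun j => (hmem j).1.1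
  have h0j : ∀ j, ∀ t > R, ζ j t = 0 := fun j => (hmem j).2
  have hpj : ∀ j, Tendsto (fun t : ℝ => t ^ (n - i) * ζ j t)
      (nhdsWithin 0 (Set.Ioi 0)) (nhds 0) := fun j => (hmem j).1.2.2.1
  have hKex : ∀ j, ∃ L, Tendsto (Kfun (n - i) (ζ j)) (nhdsWithin 0 (Set.Ioi 0)) (nhds L) :=
    fun j => (hmem j).1.2.2.2
  choose Lseq hLseq using hKex
  -- properties of differences
  have hKψ : ∀ j l, Tendsto (Kfun (n - i) (fun s => ζ j s - ζ l s))
      (nhdsWithin 0 (Set.Ioi 0)) (nhds (Lseq j - Lseq l)) := by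
    intro j l
    apply Tendsto.congr' _ ((hLseq j).sub (hLseq l))
    filter_upwards [self_mem_nhdsWithin] with t ht
    exact (Ksub (n - i) (ζ j) (ζ l) (hcj j) (hcj l) (h0j j) (h0j l) ht).symm
  have keydiff : ∀ j l, ∀ t > (0:ℝ),
      |((n - i : ℕ) : ℝ) * (Kfun (n - i) (ζ j) t - Kfun (n - i) (ζ l) t)| ≤
        dnorm n i (fun s => ζ j s - ζ l s) ∧
      |t ^ (n - i) * (ζ j t - ζ l t) +
        ((n - i : ℕ) : ℝ) * (Kfun (n - i) (ζ j) t - Kfun (n - i) (ζ l) t)| ≤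
        dnorm n i (fun s => ζ j s - ζ l s) := by
    intro j l t ht
    have h := key_le n i hin hR (fun s => ζ j s - ζ l s)
      ((hcj j).sub (hcj l)) (fun t ht => by simp [h0j j t ht, h0j l t ht])
      (by
        have := (hpj j).sub (hpj l)
        rw [sub_zero] at this
        exact this.congr (fun t => by ring))
      (hKψ j l) t ht
    rwa [Ksub (n - i) (ζ j) (ζ l) (hcj j) (hcj l) (h0j j) (h0j l) ht] at h
  have powdiff : ∀ j l, ∀ t > (0:ℝ),
      |t ^ (n - i) * (ζ j t - ζ l t)| ≤ 2 * dnorm n i (fun s => ζ j s - ζ l s) := by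
    intro j l t ht
    obtain ⟨hA, hB⟩ := keydiff j l t ht
    calc |t ^ (n - i) * (ζ j t - ζ l t)|
        = |(t ^ (n - i) * (ζ j t - ζ l t) +
            ((n - i : ℕ) : ℝ) * (Kfun (n - i) (ζ j) t - Kfun (n - i) (ζ l) t)) -
            ((n - i : ℕ) : ℝ) * (Kfun (n - i) (ζ j) t - Kfun (n - i) (ζ l) t)| := by
          ring_nf
      _ ≤ _ + _ := abs_sub _ _
      _ ≤ 2 * dnorm n i (fun s => ζ j s - ζ l s) := by linarith
  -- pointwise limit g
  have hgex : ∀ t : ℝ, ∃ c : ℝ, 0 < t → Tendsto (fun j => ζ j t) atTop (nhds c) := by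
    intro t
    by_cases ht : 0 < t
    · have hcs : CauchySeq (fun j => ζ j t) := by
        rw [Metric.cauchySeq_iff]
        intro ε hε
        have hpow : (0:ℝ) < t ^ (n - i) := pow_pos ht _
        obtain ⟨N, hN⟩ := hcauchy (ε * t ^ (n - i) / 2) (by positivity)
        refine ⟨N, fun j hj l hl => ?_⟩
        have h := powdiff j l t ht
        have h2 := hN j l hj hl
        rw [Real.dist_eq]
        have h3 : |ζ j t - ζ l t| * t ^ (n - i) < ε * t ^ (n - i) := by
          calc |ζ j t - ζ l t| * t ^ (n - i)
              = |t ^ (n - i) * (ζ j t - ζ l t)| := by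
                rw [abs_mul, abs_of_pos hpow]; ring
            _ ≤ 2 * dnorm n i (fun s => ζ j s - ζ l s) := h
            _ < 2 * (ε * t ^ (n - i) / 2) := by linarith
            _ = ε * t ^ (n - i) := by ring
        exact lt_of_mul_lt_mul_right (by linarith) hpow.le
      obtain ⟨c, hc⟩ := cauchySeq_tendsto_of_complete hcs
      exact ⟨c, fun _ => hc⟩
    · exact ⟨0, fun h => absurd h ht⟩
  choose g hg using hgex
  have hconv : ∀ t > (0:ℝ), Tendsto (fun j => ζ j t) atTop (nhds (g t)) := fun t ht => hg t ht
  -- uniform bound for the weighted difference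
  have hUB : ∀ ε > (0:ℝ), ∃ N, ∀ j ≥ N, ∀ t > (0:ℝ),
      |t ^ (n - i) * (ζ j t - g t)| ≤ ε := by
    intro ε hε
    obtain ⟨N, hN⟩ := hcauchy (ε / 2) (by linarith)
    refine ⟨N, fun j hj t ht => ?_⟩
    have hlim : Tendsto (fun l => |t ^ (n - i) * (ζ j t - ζ l t)|) atTop
        (nhds |t ^ (n - i) * (ζ j t - g t)|) :=
      (((tendsto_const_nhds.sub (hconv t ht)).const_mul _).abs)
    refine le_of_tendsto hlim ?_
    filter_upwards [eventually_ge_atTop N] with l hl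
    calc |t ^ (n - i) * (ζ j t - ζ l t)|
        ≤ 2 * dnorm n i (fun s => ζ j s - ζ l s) := powdiff j l t ht
      _ ≤ ε := by have := hN j l hj hl; linarith
  -- g vanishes beyond R
  have h0g : ∀ t > R, g t = 0 := by
    intro t ht
    have h0t : (0:ℝ) < t := hR.trans ht
    refine tendsto_nhds_unique (hconv t h0t) ?_
    exact tendsto_const_nhds.congr (fun j => (h0j j t ht).symm)
  -- continuity of g
  have hcg : ContinuousOn g (Set.Ioi 0) := by
    intro t0 ht0
    rw [Set.mem_Ioi] at ht0
    set a := t0 / 2 with ha'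
    have ha : 0 < a := by positivity
    have hsub : Set.Ici a ⊆ Set.Ioi (0:ℝ) := fun x hx => lt_of_lt_of_le ha hx
    have hU : TendstoUniformlyOn (fun j t => ζ j t) g atTop (Set.Ici a) := by
      rw [Metric.tendstoUniformlyOn_iff]
      intro ε hε
      have hapow : (0:ℝ) < a ^ (n - i) := pow_pos ha _
      obtain ⟨N, hN⟩ := hUB (ε / 2 * a ^ (n - i)) (by positivity)
      filter_upwards [eventually_ge_atTop N] with j hj x hx
      have hx0 : (0:ℝ) < x := hsub hx
      have hxpow : (0:ℝ) < x ^ (n - i) := pow_pos hx0 _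
      have h1 : |ζ j x - g x| * x ^ (n - i) ≤ ε / 2 * x ^ (n - i) := by
        calc |ζ j x - g x| * x ^ (n - i)
            = |x ^ (n - i) * (ζ j x - g x)| := by
              rw [abs_mul, abs_of_pos hxpow]; ring
          _ ≤ ε / 2 * a ^ (n - i) := hN j hj x hx0
          _ ≤ ε / 2 * x ^ (n - i) := by
              apply mul_le_mul_of_nonneg_left _ (by linarith)
              exact pow_le_pow_left₀ ha.le hx _
      have h2 : |ζ j x - g x| ≤ ε / 2 := le_of_mul_le_mul_right h1 hxpow
      rw [Real.dist_eq, abs_sub_comm]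
      linarith
    have hcont : ∀ᶠ j in atTop, ContinuousOn (fun t => ζ j t) (Set.Ici a) :=
      Eventually.of_forall fun j => (hcj j).mono hsub
    have hgc : ContinuousOn g (Set.Ici a) := hU.continuousOn hcont.frequently
    have hmem' : Set.Ici a ∈ nhds t0 := Ici_mem_nhds (by rw [ha']; linarith)
    exact (hgc.continuousAt hmem').continuousWithinAt
  -- pow limit for g
  have hpg : Tendsto (fun t : ℝ => t ^ (n - i) * g t) (nhdsWithin 0 (Set.Ioi 0)) (nhds 0) := by
    rw [Metric.tendsto_nhdsWithin_nhds]
    intro ε hε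
    obtain ⟨N, hN⟩ := hUB (ε / 3) (by linarith)
    obtain ⟨δ, hδ, hδ'⟩ := Metric.tendsto_nhdsWithin_nhds.mp (hpj N) (ε / 3) (by linarith)
    refine ⟨δ, hδ, fun t ht hdist => ?_⟩
    rw [Set.mem_Ioi] at ht
    have h1 := hN N le_rfl t ht
    have h2 := hδ' (Set.mem_Ioi.mpr ht) hdist
    rw [Real.dist_eq, sub_zero] at h2 ⊢
    calc |t ^ (n - i) * g t|
        = |t ^ (n - i) * ζ N t - t ^ (n - i) * (ζ N t - g t)| := by ring_nf
      _ ≤ |t ^ (n - i) * ζ N t| + |t ^ (n - i) * (ζ N t - g t)| := abs_sub _ _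
      _ < ε := by linarith
  -- convergence of the K functionals
  have hKconv : ∀ t > (0:ℝ), Tendsto (fun l => Kfun (n - i) (ζ l) t) atTop
      (nhds (Kfun (n - i) g t)) := by
    intro t ht
    rw [Metric.tendsto_atTop]
    intro ε hε
    set V := (volume (Set.Ioc t R)).toReal with hV
    have hV0 : 0 ≤ V := ENNReal.toReal_nonneg
    have hε' : (0:ℝ) < ε * t / (2 * (V + 1)) := by positivity
    obtain ⟨N, hN⟩ := hUB (ε * t / (2 * (V + 1))) hε'
    refine ⟨N, fun l hl => ?_⟩
    have hcψ : ContinuousOn (fun s => ζ l s - g s) (Set.Ioi 0) := (hcj l).sub hcg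
    have h0ψ : ∀ s > R, ζ l s - g s = 0 := fun s hs => by
      rw [h0j l s hs, h0g s hs, sub_self]
    have heq : Kfun (n - i) (ζ l) t - Kfun (n - i) g t =
        ∫ s in Set.Ioc t R, (ζ l s - g s) * s ^ (n - i - 1) := by
      rw [← Ksub (n - i) (ζ l) g (hcj l) hcg (h0j l) h0g ht,
        Keq (n - i) (fun s => ζ l s - g s) hcψ h0ψ ht]
    rw [Real.dist_eq, heq]
    have hmeas : AEStronglyMeasurable (fun s => (ζ l s - g s) * s ^ (n - i - 1))
        (volume.restrict (Set.Ioc t R)) :=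
      ((int1 (n - i) (fun s => ζ l s - g s) hcψ h0ψ ht).mono_set
        Set.Ioc_subset_Ioi_self).aestronglyMeasurable
    have hbound : ∀ s ∈ Set.Ioc t R, ‖(ζ l s - g s) * s ^ (n - i - 1)‖ ≤
        ε / (2 * (V + 1)) := by
      intro s hs
      have hs0 : 0 < s := ht.trans hs.1
      have hspow : (0:ℝ) < s ^ (n - i) := pow_pos hs0 _
      have h1 := hN l hl s hs0
      rw [abs_mul, abs_of_pos hspow] at h1
      have hps : s ^ (n - i - 1) * s = s ^ (n - i) := by
        rw [← pow_succ]; congr 1; omega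
      have h2 : |ζ l s - g s| * s ^ (n - i - 1) * s ≤ ε * t / (2 * (V + 1)) := by
        calc |ζ l s - g s| * s ^ (n - i - 1) * s
            = s ^ (n - i) * |ζ l s - g s| := by rw [mul_assoc, hps]; ring
          _ ≤ ε * t / (2 * (V + 1)) := h1
      have h3 : |ζ l s - g s| * s ^ (n - i - 1) * t ≤ ε * t / (2 * (V + 1)) := by
        refine le_trans ?_ h2
        apply mul_le_mul_of_nonneg_left hs.1.le
        positivity
      rw [Real.norm_eq_abs, abs_mul, abs_pow, abs_of_pos hs0]
      calc |ζ l s - g s| * s ^ (n - i - 1)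
          ≤ ε * t / (2 * (V + 1)) / t := by
            rw [le_div_iff₀ ht]; exact h3
        _ = ε / (2 * (V + 1)) := by field_simp
    have hfin : volume (Set.Ioc t R) < ⊤ := measure_Ioc_lt_top
    have hle := MeasureTheory.norm_setIntegral_le_of_norm_le_const hfin hbound
    rw [Real.norm_eq_abs] at hle
    calc |∫ s in Set.Ioc t R, (ζ l s - g s) * s ^ (n - i - 1)|
        ≤ ε / (2 * (V + 1)) * V := hle
      _ < ε := by
          rw [div_mul_eq_mul_div, div_lt_iff₀ (by positivity)]
          nlinarith
  -- Cauchy property of the limits Lseq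
  have habs : ∀ x : ℝ, |x| ≤ |((n - i : ℕ) : ℝ) * x| := fun x => by
    rw [abs_mul, Nat.abs_cast]
    nlinarith [abs_nonneg x]
  have hLle : ∀ j l, |Lseq j - Lseq l| ≤ dnorm n i (fun s => ζ j s - ζ l s) := by
    intro j l
    have hlim : Tendsto (fun t => |((n - i : ℕ) : ℝ) *
        (Kfun (n - i) (ζ j) t - Kfun (n - i) (ζ l) t)|)
        (nhdsWithin 0 (Set.Ioi 0)) (nhds |((n - i : ℕ) : ℝ) * (Lseq j - Lseq l)|) :=
      (((hLseq j).sub (hLseq l)).const_mul _).abs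
    have h := le_of_tendsto hlim (by
      filter_upwards [self_mem_nhdsWithin] with t ht
      exact (keydiff j l t ht).1)
    exact le_trans (habs _) h
  have hLCauchy : CauchySeq Lseq := by
    rw [Metric.cauchySeq_iff]
    intro ε hε
    obtain ⟨N, hN⟩ := hcauchy ε hε
    exact ⟨N, fun j hj l hl => lt_of_le_of_lt (by rw [Real.dist_eq]; exact hLle j l)
      (hN j l hj hl)⟩
  obtain ⟨Lg, hLg⟩ := cauchySeq_tendsto_of_complete hLCauchy
  -- uniform bound for K differences against g
  have hKgU : ∀ ε > (0:ℝ), ∃ N, ∀ j ≥ N, ∀ t > (0:ℝ),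
      |Kfun (n - i) (ζ j) t - Kfun (n - i) g t| ≤ ε := by
    intro ε hε
    obtain ⟨N, hN⟩ := hcauchy ε hε
    refine ⟨N, fun j hj t ht => ?_⟩
    have hlim : Tendsto (fun l => |Kfun (n - i) (ζ j) t - Kfun (n - i) (ζ l) t|) atTop
        (nhds |Kfun (n - i) (ζ j) t - Kfun (n - i) g t|) :=
      (tendsto_const_nhds.sub (hKconv t ht)).abs
    refine le_of_tendsto hlim ?_
    filter_upwards [eventually_ge_atTop N] with l hl
    exact le_of_lt (lt_of_le_of_lt (le_trans (habs _) (keydiff j l t ht).1) (hN j l hj hl))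
  -- limit of K g at 0+
  have hKglim : Tendsto (Kfun (n - i) g) (nhdsWithin 0 (Set.Ioi 0)) (nhds Lg) := by
    rw [Metric.tendsto_nhdsWithin_nhds]
    intro ε hε
    obtain ⟨N1, hN1⟩ := hKgU (ε / 3) (by linarith)
    obtain ⟨j, hjball, hjN⟩ :=
      ((hLg.eventually (Metric.ball_mem_nhds Lg (show (0:ℝ) < ε / 3 by linarith))).and
        (eventually_ge_atTop N1)).exists
    obtain ⟨δ, hδ, hδ'⟩ := Metric.tendsto_nhdsWithin_nhds.mp (hLseq j) (ε / 3) (by linarith)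
    refine ⟨δ, hδ, fun t ht hdist => ?_⟩
    have ht0 : (0:ℝ) < t := Set.mem_Ioi.mp ht
    have e1 := hN1 j hjN t ht0
    have e2 := hδ' ht hdist
    rw [Real.dist_eq] at hjball
    rw [Real.dist_eq] at e2 ⊢
    calc |Kfun (n - i) g t - Lg|
        = |-(Kfun (n - i) (ζ j) t - Kfun (n - i) g t) +
            (Kfun (n - i) (ζ j) t - Lseq j) + (Lseq j - Lg)| := by ring_nf
      _ ≤ |-(Kfun (n - i) (ζ j) t - Kfun (n - i) g t) +
            (Kfun (n - i) (ζ j) t - Lseq j)| + |Lseq j - Lg| := abs_add_le _ _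
      _ ≤ |-(Kfun (n - i) (ζ j) t - Kfun (n - i) g t)| +
            |Kfun (n - i) (ζ j) t - Lseq j| + |Lseq j - Lg| :=
          add_le_add_left (abs_add_le _ _) _
      _ < ε := by rw [abs_neg]; linarith
  refine ⟨g, ⟨⟨hcg, ⟨R, h0g⟩, hpg, ⟨Lg, hKglim⟩⟩, h0g⟩, ?_⟩
  -- final convergence in norm
  rw [Metric.tendsto_atTop]
  intro ε hε
  obtain ⟨N, hN⟩ := hcauchy (ε / 4) (by linarith)
  refine ⟨N, fun j hj => ?_⟩
  have hA : ∀ t > (0:ℝ), |((n - i : ℕ) : ℝ) *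
      (Kfun (n - i) (ζ j) t - Kfun (n - i) g t)| ≤ ε / 4 := by
    intro t ht
    have hlim : Tendsto (fun l => |((n - i : ℕ) : ℝ) *
        (Kfun (n - i) (ζ j) t - Kfun (n - i) (ζ l) t)|) atTop
        (nhds |((n - i : ℕ) : ℝ) * (Kfun (n - i) (ζ j) t - Kfun (n - i) g t)|) :=
      ((tendsto_const_nhds.sub (hKconv t ht)).const_mul _).abs
    refine le_of_tendsto hlim ?_
    filter_upwards [eventually_ge_atTop N] with l hl
    exact le_of_lt (lt_of_le_of_lt (keydiff j l t ht).1 (hN j l hj hl))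
  have hB : ∀ t > (0:ℝ), |t ^ (n - i) * (ζ j t - g t) +
      ((n - i : ℕ) : ℝ) * (Kfun (n - i) (ζ j) t - Kfun (n - i) g t)| ≤ ε / 4 := by
    intro t ht
    have hlim : Tendsto (fun l => |t ^ (n - i) * (ζ j t - ζ l t) +
        ((n - i : ℕ) : ℝ) * (Kfun (n - i) (ζ j) t - Kfun (n - i) (ζ l) t)|) atTop
        (nhds |t ^ (n - i) * (ζ j t - g t) +
          ((n - i : ℕ) : ℝ) * (Kfun (n - i) (ζ j) t - Kfun (n - i) g t)|) :=
      (((tendsto_const_nhds.sub (hconv t ht)).const_mul _).add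
        ((tendsto_const_nhds.sub (hKconv t ht)).const_mul _)).abs
    refine le_of_tendsto hlim ?_
    filter_upwards [eventually_ge_atTop N] with l hl
    exact le_of_lt (lt_of_le_of_lt (keydiff j l t ht).2 (hN j l hj hl))
  have hcψ : ContinuousOn (fun s => ζ j s - g s) (Set.Ioi 0) := (hcj j).sub hcg
  have h0ψ : ∀ s > R, ζ j s - g s = 0 := fun s hs => by
    rw [h0j j s hs, h0g s hs, sub_self]
  have hdle : dnorm n i (fun t => ζ j t - g t) ≤ ε / 2 := by
    rw [dnorm_eq n i hin]
    have hsA : (⨆ t : Set.Ioi (0:ℝ),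
        |((n - i : ℕ) : ℝ) * Kfun (n - i) (fun s => ζ j s - g s) (t:ℝ)|) ≤ ε / 4 := by
      apply Real.iSup_le _ (by linarith)
      intro u
      rw [Ksub (n - i) (ζ j) g (hcj j) hcg (h0j j) h0g u.2]
      exact hA u u.2
    have hsB : (⨆ t : Set.Ioi (0:ℝ), |(t:ℝ) ^ (n - i) * (ζ j (t:ℝ) - g (t:ℝ)) +
        ((n - i : ℕ) : ℝ) * Kfun (n - i) (fun s => ζ j s - g s) (t:ℝ)|) ≤ ε / 4 := by
      apply Real.iSup_le _ (by linarith)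
      intro u
      rw [Ksub (n - i) (ζ j) g (hcj j) hcg (h0j j) h0g u.2]
      exact hB u u.2
    linarith
  have hdnn : 0 ≤ dnorm n i (fun t => ζ j t - g t) := by
    rw [dnorm_eq n i hin]
    have := Real.iSup_nonneg (f := fun t : Set.Ioi (0:ℝ) =>
      |((n - i : ℕ) : ℝ) * Kfun (n - i) (fun s => ζ j s - g s) (t:ℝ)|)
      (fun _ => abs_nonneg _)
    have := Real.iSup_nonneg (f := fun t : Set.Ioi (0:ℝ) =>
      |(t:ℝ) ^ (n - i) * (ζ j (t:ℝ) - g (t:ℝ)) +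
        ((n - i : ℕ) : ℝ) * Kfun (n - i) (fun s => ζ j s - g s) (t:ℝ)|)
      (fun _ => abs_nonneg _)
    linarith
  rw [Real.dist_eq, sub_zero, abs_of_nonneg hdnn]
  linarith
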